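/- arXiv:2412.21099 — 5 statements merged into one kernel-verified Lean document; each statement's English description precedes it below -/
import Mathlib

section
/- Let (Ω, F, P) be a probability space, m a sub-σ-algebra of F, and X, Y square-integrable real-valued random variables with E[X] = 1. Let a > 1, p ∈ [0,1], q > 0 be constants with (p+q)·a > 1, and set Δ = q/(p+q). Assume that almost surely: Var(X | m) = E[X | m]²/(a − 1), Var(Y | m) = E[Y | m]²/((p+q)a − 1), and E[Y | m] = Δ · E[X | m] + (1 − Δ). Then Var(Y) = (q²/(p+q)) · ((a−1)/((p+q)a − 1)) · Var(X) + (1 − q²/(p+q)) · (1/((p+q)a − 1)). -/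
open MeasureTheory ProbabilityTheory

/-- Conditional variance of `X` given the sub-σ-algebra `m`:
`Var(X | m) = E[(X − E[X | m])² | m]`. -/
noncomputable def condVar {Ω : Type*} (m : MeasurableSpace Ω) {m0 : MeasurableSpace Ω}
    (P : Measure Ω) (X : Ω → ℝ) : Ω → ℝ :=
  P[fun ω => (X ω - (P[X | m]) ω) ^ 2 | m]

lemma memL2_mul_integrable {Ω : Type*} {m0 : MeasurableSpace Ω} {P : Measure Ω}
    {f g : Ω → ℝ} (hf : MemLp f 2 P) (hg : MemLp g 2 P) :
    Integrable (fun ω => f ω * g ω) P := by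
  have h : (fun ω => f ω * g ω) = fun ω => ((f ω + g ω) ^ 2 - f ω ^ 2 - g ω ^ 2) / 2 := by
    funext ω; ring
  rw [h]
  exact (((hf.add hg).integrable_sq.sub hf.integrable_sq).sub hg.integrable_sq).div_const 2

/-- Law of total variance ingredient: `∫ Var(f|m) = ∫ f² − ∫ (E[f|m])²`. -/
lemma integral_condVar_eq {Ω : Type*} {m m0 : MeasurableSpace Ω} (hm : m ≤ m0)
    (P : Measure Ω) [IsProbabilityMeasure P] {f : Ω → ℝ}
    (hf : MemLp f 2 P) (hcf : MemLp (P[f | m]) 2 P) :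
    ∫ ω, condVar m P f ω ∂P
      = ∫ ω, f ω ^ 2 ∂P - ∫ ω, (P[f | m]) ω ^ 2 ∂P := by
  haveI : IsFiniteMeasure (P.trim hm) := isFiniteMeasure_trim hm
  have hfi : Integrable f P := hf.integrable one_le_two
  have hmul : Integrable (fun ω => (P[f | m]) ω * f ω) P := memL2_mul_integrable hcf hf
  -- orthogonality : ∫ cf * f = ∫ cf²
  have horth : ∫ ω, (P[f | m]) ω * f ω ∂P = ∫ ω, (P[f | m]) ω ^ 2 ∂P := by
    have h1 : P[fun ω => (P[f | m]) ω * f ω | m] =ᵐ[P] fun ω => (P[f | m]) ω * (P[f | m]) ω := by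
      have := condExp_mul_of_stronglyMeasurable_left (μ := P) (m := m)
        stronglyMeasurable_condExp hmul hfi
      exact this
    calc ∫ ω, (P[f | m]) ω * f ω ∂P
        = ∫ ω, (P[fun ω => (P[f | m]) ω * f ω | m]) ω ∂P := (integral_condExp hm).symm
      _ = ∫ ω, (P[f | m]) ω * (P[f | m]) ω ∂P := integral_congr_ae h1
      _ = ∫ ω, (P[f | m]) ω ^ 2 ∂P := by congr 1; funext ω; ring
  have hsq : Integrable (fun ω => (f ω - (P[f | m]) ω) ^ 2) P := by
    have := (hf.sub hcf).integrable_sq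
    simpa [Pi.sub_apply] using this
  have h2 : ∫ ω, condVar m P f ω ∂P = ∫ ω, (f ω - (P[f | m]) ω) ^ 2 ∂P := by
    unfold _root_.condVar
    exact integral_condExp hm
  rw [h2]
  have hexp : (fun ω => (f ω - (P[f | m]) ω) ^ 2)
      = fun ω => f ω ^ 2 - 2 * ((P[f | m]) ω * f ω) + (P[f | m]) ω ^ 2 := by
    funext ω; ring
  have i1 : Integrable (fun ω => f ω ^ 2 - 2 * ((P[f | m]) ω * f ω)) P :=
    hf.integrable_sq.sub (hmul.const_mul 2)
  have i2 : Integrable (fun ω => 2 * ((P[f | m]) ω * f ω)) P := hmul.const_mul 2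
  rw [hexp, integral_add i1 hcf.integrable_sq,
    integral_sub hf.integrable_sq i2, integral_const_mul, horth]
  ring

/-- Abstract one-step variance recursion (Lemma 1 of the paper): with `E[X] = 1`,
`a > 1`, `p ∈ [0,1]`, `q > 0`, `(p+q)a > 1`, `Δ = q/(p+q)`, and a.s.
`Var(X|m) = E[X|m]²/(a−1)`, `Var(Y|m) = E[Y|m]²/((p+q)a−1)`,
`E[Y|m] = Δ E[X|m] + (1−Δ)`, we have
`Var(Y) = (q²/(p+q))((a−1)/((p+q)a−1)) Var(X) + (1 − q²/(p+q))(1/((p+q)a−1))`. -/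
theorem stmt5 {Ω : Type*} (m : MeasurableSpace Ω) [m0 : MeasurableSpace Ω]
    (hm : m ≤ m0) (P : Measure Ω) [IsProbabilityMeasure P]
    (X Y : Ω → ℝ) (hX : MemLp X 2 P) (hY : MemLp Y 2 P)
    (hXmean : ∫ ω, X ω ∂P = 1)
    (a p q Δ : ℝ) (ha : 1 < a) (hp : p ∈ Set.Icc (0 : ℝ) 1) (hq : 0 < q)
    (hpqa : 1 < (p + q) * a) (hΔ : Δ = q / (p + q))
    (hvarX : condVar m P X =ᵐ[P] fun ω => ((P[X | m]) ω) ^ 2 / (a - 1))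
    (hvarY : condVar m P Y =ᵐ[P] fun ω => ((P[Y | m]) ω) ^ 2 / ((p + q) * a - 1))
    (hmean : P[Y | m] =ᵐ[P] fun ω => Δ * (P[X | m]) ω + (1 - Δ)) :
    variance Y P = q ^ 2 / (p + q) * ((a - 1) / ((p + q) * a - 1)) * variance X P
      + (1 - q ^ 2 / (p + q)) * (1 / ((p + q) * a - 1)) := by
  haveI : IsFiniteMeasure (P.trim hm) := isFiniteMeasure_trim hm
  have hs : 0 < p + q := by linarith [hp.1]
  have ha1 : (0:ℝ) < a - 1 := by linarith
  have hc : (0:ℝ) < (p + q) * a - 1 := by linarith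
  have ha0 : (0:ℝ) < a := by linarith
  -- L² membership of conditional expectations
  have hcX : MemLp (P[X | m]) 2 P := by
    rw [memLp_two_iff_integrable_sq
      ((stronglyMeasurable_condExp.mono hm).aestronglyMeasurable)]
    have hint : Integrable (condVar m P X) P := integrable_condExp
    have hint2 : Integrable (fun ω => ((P[X | m]) ω) ^ 2 / (a - 1)) P :=
      hint.congr hvarX
    have := hint2.mul_const (a - 1)
    refine this.congr (Filter.Eventually.of_forall fun ω => ?_)
    field_simp
  have hcY : MemLp (P[Y | m]) 2 P := by
    rw [memLp_two_iff_integrable_sq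
      ((stronglyMeasurable_condExp.mono hm).aestronglyMeasurable)]
    have hint : Integrable (condVar m P Y) P := integrable_condExp
    have hint2 : Integrable (fun ω => ((P[Y | m]) ω) ^ 2 / ((p + q) * a - 1)) P :=
      hint.congr hvarY
    have := hint2.mul_const ((p + q) * a - 1)
    refine this.congr (Filter.Eventually.of_forall fun ω => ?_)
    field_simp
  -- mean of conditional expectation of X
  have hcXmean : ∫ ω, (P[X | m]) ω ∂P = 1 := by
    rw [integral_condExp hm]; exact hXmean
  -- mean of Y is 1
  have hYmean : ∫ ω, Y ω ∂P = 1 := by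
    rw [← integral_condExp hm (f := Y)]
    rw [integral_congr_ae hmean]
    rw [integral_add ((hcX.integrable one_le_two).const_mul Δ) (integrable_const _),
      integral_const_mul, hcXmean, integral_const]
    simp
  -- abbreviations
  set A := ∫ ω, X ω ^ 2 ∂P with hA
  set B := ∫ ω, (P[X | m]) ω ^ 2 ∂P with hB
  set C := ∫ ω, Y ω ^ 2 ∂P with hC
  set D := ∫ ω, (P[Y | m]) ω ^ 2 ∂P with hD
  -- equation for X
  have hE1 : A - B = B / (a - 1) := by
    rw [← integral_condVar_eq hm P hX hcX, integral_congr_ae hvarX, integral_div]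
  have hE2 : C - D = D / ((p + q) * a - 1) := by
    rw [← integral_condVar_eq hm P hY hcY, integral_congr_ae hvarY, integral_div]
  -- expansion of D
  have hE3 : D = Δ ^ 2 * B + (2 * Δ * (1 - Δ)) * 1 + (1 - Δ) ^ 2 := by
    have hsq : (fun ω => ((P[Y | m]) ω) ^ 2)
        =ᵐ[P] fun ω => Δ ^ 2 * ((P[X | m]) ω) ^ 2
          + (2 * Δ * (1 - Δ)) * (P[X | m]) ω + (1 - Δ) ^ 2 := by
      filter_upwards [hmean] with ω hω
      rw [hω]; ring
    have j1 : Integrable (fun ω => Δ ^ 2 * ((P[X | m]) ω) ^ 2) P :=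
      (hcX.integrable_sq).const_mul _
    have j2 : Integrable (fun ω => (2 * Δ * (1 - Δ)) * (P[X | m]) ω) P :=
      (hcX.integrable one_le_two).const_mul _
    have j12 : Integrable (fun ω => Δ ^ 2 * ((P[X | m]) ω) ^ 2
        + (2 * Δ * (1 - Δ)) * (P[X | m]) ω) P := j1.add j2
    rw [hD, integral_congr_ae hsq, integral_add j12 (integrable_const _),
      integral_add j1 j2,
      integral_const_mul, integral_const_mul, hcXmean, integral_const]
    simp
    exact Or.inl rfl
  -- solve the linear system
  have hBA : B = A * (a - 1) / a := by
    have h := hE1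
    field_simp at h ⊢
    linarith
  have hCD : C = D * ((p + q) * a) / ((p + q) * a - 1) := by
    have h := hE2
    field_simp at h ⊢
    linarith
  rw [variance_eq_sub hY, variance_eq_sub hX]
  have hACrw : (P[Y ^ 2] : ℝ) = C ∧ (P[X ^ 2] : ℝ) = A := ⟨rfl, rfl⟩
  have hYm' : (P[Y] : ℝ) = 1 := hYmean
  have hXm' : (P[X] : ℝ) = 1 := hXmean
  rw [hACrw.1, hACrw.2, hYm', hXm', hCD, hE3, hBA, hΔ]
  have hs' : p + q ≠ 0 := ne_of_gt hs
  have hc' : (p + q) * a - 1 ≠ 0 := ne_of_gt hc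
  have ha' : a ≠ 0 := ne_of_gt ha0
  field_simp
  ring
end

section
/- Let a₀ > 1 be a constant and let (a_t)_{t≥1}, (p_t)_{t≥1} ⊆ [0,1], (q_t)_{t≥1} ⊆ (0,∞) be real sequences with (p_t+q_t)·a_t > 1 for all t, and set Δ_t = q_t/(p_t+q_t). Let (V_t)_{t≥1} satisfy the variance recursion V_{t+1} = (q_t²/(p_t+q_t)) · ((a_t−1)/((p_t+q_t)a_t − 1)) · V_t + (1 − q_t²/(p_t+q_t)) · (1/((p_t+q_t)a_t − 1)) for all t ≥ 1. If V_t = 1/(a₀ − 1) for all t ≥ 1, then necessarily q_t = Δ_t · a₀ / (a_t − Δ_t² a_t + Δ_t² a₀) for all t ≥ 1. -/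
/-- Lemma 2 of the paper: in the Generalized Smith–Miller variance recursion, a
constant variance process `V_t ≡ 1/(a₀ − 1)` forces
`q_t = Δ_t a₀ / (a_t − Δ_t² a_t + Δ_t² a₀)` for all `t ≥ 1`. -/
theorem stmt6 (a₀ : ℝ) (ha₀ : 1 < a₀) (a p q V Δ : ℕ → ℝ)
    (hp : ∀ t, 1 ≤ t → p t ∈ Set.Icc (0 : ℝ) 1)
    (hq : ∀ t, 1 ≤ t → 0 < q t)
    (hpqa : ∀ t, 1 ≤ t → 1 < (p t + q t) * a t)
    (hΔ : ∀ t, 1 ≤ t → Δ t = q t / (p t + q t))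
    (hrec : ∀ t, 1 ≤ t → V (t + 1) =
      q t ^ 2 / (p t + q t) * ((a t - 1) / ((p t + q t) * a t - 1)) * V t
        + (1 - q t ^ 2 / (p t + q t)) * (1 / ((p t + q t) * a t - 1)))
    (hconst : ∀ t, 1 ≤ t → V t = 1 / (a₀ - 1)) :
    ∀ t, 1 ≤ t → q t = Δ t * a₀ / (a t - Δ t ^ 2 * a t + Δ t ^ 2 * a₀) := by
  intro t ht
  have hqt := hq t ht
  have hpt := (hp t ht).1
  have hs : 0 < p t + q t := by linarith
  have hsa : (p t + q t) * a t - 1 ≠ 0 := by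
    have := hpqa t ht; linarith
  have ha0 : a₀ - 1 ≠ 0 := by linarith
  have E := hrec t ht
  rw [hconst t ht, hconst (t + 1) (by omega)] at E
  field_simp at E
  have h2 : (p t + q t) * ((p t + q t) * a t - 1) * (a₀ - 1) *
      ((p t + q t) ^ 2 * a t - q t ^ 2 * a t + q t ^ 2 * a₀ - (p t + q t) * a₀) = 0 := by
    linear_combination (p t + q t) * ((p t + q t) * a t - 1) * (a₀ - 1) * E
  have key : (p t + q t) ^ 2 * a t - q t ^ 2 * a t + q t ^ 2 * a₀
      = (p t + q t) * a₀ := by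
    rcases mul_eq_zero.1 h2 with h | h
    · exfalso
      rcases mul_eq_zero.1 h with h' | h'
      · rcases mul_eq_zero.1 h' with h'' | h''
        · exact hs.ne' h''
        · exact hsa h''
      · exact ha0 h'
    · linarith
  rw [hΔ t ht]
  have ha0pos : 0 < a₀ := by linarith
  have hD : a t - (q t / (p t + q t)) ^ 2 * a t + (q t / (p t + q t)) ^ 2 * a₀
      = a₀ / (p t + q t) := by
    field_simp
    linear_combination key
  rw [hD]
  field_simp
end

section
/- Let a₀ > 1 and ψ > 0 be constants, (Δ_t)_{t≥1} ⊆ (0,1], and (v_t)_{t≥1} a sequence of nonnegative integers. Define sequences (A_t)_{t≥1} (the predictive shape parameters a_{t|t−1}) and (a_t)_{t≥1} recursively by A_1 = a₀, a_t = A_t + v_t/ψ, and A_{t+1} = a₀ · a_t / (a_t − Δ_t² (a_t − a₀)). Then for all t ≥ 1, the denominators a_t − Δ_t²(a_t − a₀) are strictly positive, A_t ≥ a₀ > 1, and a_t ≥ a₀ > 1. -/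
/-- Inductive core of Theorem 1 of the paper: the predictive shape parameters
`A_t = a_{t|t−1}` and filtering shape parameters `a_t` of the variance-stationary
Generalized Smith–Miller Model satisfy `A_t ≥ a₀ > 1` and `a_t ≥ a₀ > 1`, with
strictly positive denominators in the update recursion. -/
theorem stmt8 (a₀ ψ : ℝ) (ha₀ : 1 < a₀) (hψ : 0 < ψ)
    (Δ : ℕ → ℝ) (hΔ : ∀ t, 1 ≤ t → Δ t ∈ Set.Ioc (0 : ℝ) 1)
    (v : ℕ → ℕ) (A a : ℕ → ℝ)
    (hA1 : A 1 = a₀)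
    (ha : ∀ t, 1 ≤ t → a t = A t + (v t : ℝ) / ψ)
    (hArec : ∀ t, 1 ≤ t → A (t + 1) = a₀ * a t / (a t - Δ t ^ 2 * (a t - a₀))) :
    ∀ t, 1 ≤ t →
      0 < a t - Δ t ^ 2 * (a t - a₀) ∧ a₀ ≤ A t ∧ a₀ ≤ a t := by
  -- first, a key step: given a₀ ≤ A t, derive the full conclusion at t
  have key : ∀ t, 1 ≤ t → a₀ ≤ A t →
      0 < a t - Δ t ^ 2 * (a t - a₀) ∧ a₀ ≤ A t ∧ a₀ ≤ a t := by
    intro t ht hAt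
    have hvt : 0 ≤ (v t : ℝ) / ψ := div_nonneg (Nat.cast_nonneg _) hψ.le
    have hat : a₀ ≤ a t := by rw [ha t ht]; linarith
    obtain ⟨hΔ0, hΔ1⟩ := hΔ t ht
    have hΔsq : Δ t ^ 2 ≤ 1 := by nlinarith
    have hΔsq0 : 0 ≤ Δ t ^ 2 := sq_nonneg _
    have hden : 0 < a t - Δ t ^ 2 * (a t - a₀) := by nlinarith
    exact ⟨hden, hAt, hat⟩
  intro t ht
  induction t with
  | zero => omega
  | succ n ih =>
    rcases Nat.eq_or_lt_of_le ht with h | h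
    · exact key 1 le_rfl (le_of_eq hA1.symm) |>.elim (fun hd ⟨hA, ha'⟩ => by
        simp only [← h] at *
        exact ⟨hd, hA, ha'⟩)
    · have hn : 1 ≤ n := by omega
      obtain ⟨hden, hA, hat⟩ := ih hn
      have hAn1 : a₀ ≤ A (n + 1) := by
        rw [hArec n hn]
        rw [le_div_iff₀ hden]
        have : 0 ≤ Δ n ^ 2 * (a n - a₀) :=
          mul_nonneg (sq_nonneg _) (by linarith)
        nlinarith
      exact key (n + 1) (by omega) hAn1
end

section
/- Let δ ∈ (0,1) and let (q_t)_{t≥1} be a real sequence with 0 < q_t < δ for all t. Let (a_t)_{t≥1} be defined by a given a_1 > 0 and a_{t+1} = q_t a_t + 1, and assume q_t · a_t > 1 for all t ≥ 1. Let (V_t)_{t≥1} satisfy V_1 ≥ 0 and V_{t+1} = ((q_t a_t − q_t)/(q_t a_t − 1)) · V_t + (1 − q_t)/(q_t a_t − 1) for all t ≥ 1. Then V_t → ∞ as t → ∞. -/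
open Filter

/-- Deterministic content of Theorem 2 of the paper (diverging variance): with
`0 < q_t < δ < 1`, `a_{t+1} = q_t a_t + 1`, `q_t a_t > 1`, and the variance
recursion `V_{t+1} = ((q_t a_t − q_t)/(q_t a_t − 1)) V_t + (1 − q_t)/(q_t a_t − 1)`,
the variances diverge: `V_t → ∞`. -/
theorem stmt9 (δ : ℝ) (hδ : δ ∈ Set.Ioo (0 : ℝ) 1)
    (q a V : ℕ → ℝ)
    (hq : ∀ t, 1 ≤ t → 0 < q t ∧ q t < δ)
    (ha1 : 0 < a 1)
    (harec : ∀ t, 1 ≤ t → a (t + 1) = q t * a t + 1)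
    (hqa : ∀ t, 1 ≤ t → 1 < q t * a t)
    (hV1 : 0 ≤ V 1)
    (hVrec : ∀ t, 1 ≤ t → V (t + 1) =
      (q t * a t - q t) / (q t * a t - 1) * V t + (1 - q t) / (q t * a t - 1)) :
    Tendsto V atTop atTop := by
  obtain ⟨hδ0, hδ1⟩ := hδ
  set B : ℝ := max (a 1) (1 / (1 - δ)) with hB
  have hB0 : 0 < B := lt_of_lt_of_le ha1 (le_max_left _ _)
  have hBge : 1 / (1 - δ) ≤ B := le_max_right _ _
  -- a is positive and bounded by B
  have haB : ∀ t, 1 ≤ t → 0 < a t ∧ a t ≤ B := by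
    intro t ht
    induction t, ht using Nat.le_induction with
    | base => exact ⟨ha1, le_max_left _ _⟩
    | succ n hn ih =>
      obtain ⟨hpos, hle⟩ := ih
      obtain ⟨hq0, hqδ⟩ := hq n hn
      have h1 : q n * a n < δ * B := by
        have h1a : q n * a n < δ * a n := by nlinarith
        have h1b : δ * a n ≤ δ * B := by nlinarith
        linarith
      constructor
      · rw [harec n hn]; positivity
      · rw [harec n hn]
        have : δ * B + 1 ≤ B := by
          have h2 : (1 - δ) * B ≥ 1 := by
            rw [ge_iff_le, ← div_le_iff₀' (by linarith)]
            exact hBge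
          nlinarith
        linarith
  set c : ℝ := (1 - δ) / (δ * B) with hc
  have hc0 : 0 < c := div_pos (by linarith) (by positivity)
  -- V is nonnegative and increases by at least c each step
  have key : ∀ t, 1 ≤ t → 0 ≤ V t ∧ V t + c ≤ V (t + 1) := by
    intro t ht
    induction t, ht using Nat.le_induction with
    | base =>
      refine ⟨hV1, ?_⟩
      obtain ⟨hq0, hqδ⟩ := hq 1 le_rfl
      obtain ⟨hpos, hle⟩ := haB 1 le_rfl
      have hqa1 := hqa 1 le_rfl
      rw [hVrec 1 le_rfl]
      have hden : 0 < q 1 * a 1 - 1 := by linarith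
      have hcoef : 1 ≤ (q 1 * a 1 - q 1) / (q 1 * a 1 - 1) := by
        rw [le_div_iff₀ hden]; linarith
      have hadd : c ≤ (1 - q 1) / (q 1 * a 1 - 1) := by
        rw [hc]
        apply div_le_div₀ (by linarith) (by linarith) hden
        nlinarith
      nlinarith
    | succ n hn ih =>
      obtain ⟨hVn, hstep⟩ := ih
      have hVn1 : 0 ≤ V (n + 1) := by linarith
      refine ⟨hVn1, ?_⟩
      obtain ⟨hq0, hqδ⟩ := hq (n + 1) (by omega)
      obtain ⟨hpos, hle⟩ := haB (n + 1) (by omega)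
      have hqa1 := hqa (n + 1) (by omega)
      rw [hVrec (n + 1) (by omega)]
      have hden : 0 < q (n + 1) * a (n + 1) - 1 := by linarith
      have hcoef : 1 ≤ (q (n + 1) * a (n + 1) - q (n + 1)) / (q (n + 1) * a (n + 1) - 1) := by
        rw [le_div_iff₀ hden]; linarith
      have hadd : c ≤ (1 - q (n + 1)) / (q (n + 1) * a (n + 1) - 1) := by
        rw [hc]
        apply div_le_div₀ (by linarith) (by linarith) hden
        nlinarith
      nlinarith
  -- lower bound V t ≥ V 1 + (t - 1) * c for t ≥ 1
  have lower : ∀ t : ℕ, 1 ≤ t → V 1 + ((t : ℝ) - 1) * c ≤ V t := by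
    intro t ht
    induction t, ht using Nat.le_induction with
    | base => simp
    | succ n hn ih =>
      have := (key n hn).2
      push_cast
      push_cast at ih
      linarith
  have hg : Tendsto (fun n : ℕ => V 1 + ((n : ℝ) - 1) * c) atTop atTop := by
    apply tendsto_atTop_add_const_left
    apply Tendsto.atTop_mul_const hc0
    exact tendsto_atTop_add_const_right _ (-1) tendsto_natCast_atTop_atTop
  apply tendsto_atTop_mono' atTop _ hg
  filter_upwards [eventually_ge_atTop 1] with t ht
  exact lower t ht
end

section
/- Let a', b', y > 0, v a positive integer, ψ > 0, μ > 0, p ∈ [0,1], q > 0 with p + q > 0. Define a = a' + v/ψ, b = b' + y/(μψ), Δ = q/(p+q), z = (v/ψ)/(a' + v/ψ), ω₁ = Δz, ω₂ = Δ(1−z), ω₃ = 1 − Δ. Then ω₁ + ω₂ + ω₃ = 1 and (p·a + q·b)/((p+q)·a) = ω₁ · (y/(vμ)) + ω₂ · (b'/a') + ω₃. -/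
/-- Algebraic content of the evolutionary credibility proposition (Proposition 3
of the paper): with `a = a' + v/ψ`, `b = b' + y/(μψ)`, `Δ = q/(p+q)`,
`z = (v/ψ)/(a' + v/ψ)`, `ω₁ = Δz`, `ω₂ = Δ(1−z)`, `ω₃ = 1−Δ`, the weights sum to
one and `(pa + qb)/((p+q)a) = ω₁ (y/(vμ)) + ω₂ (b'/a') + ω₃`. -/
theorem stmt13 (a' b' y : ℝ) (ha' : 0 < a') (hb' : 0 < b') (hy : 0 < y)
    (v : ℕ) (hv : 0 < v) (ψ μ : ℝ) (hψ : 0 < ψ) (hμ : 0 < μ)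
    (p q : ℝ) (hp : p ∈ Set.Icc (0 : ℝ) 1) (hq : 0 < q) (hpq : 0 < p + q)
    (a b Δ z ω₁ ω₂ ω₃ : ℝ)
    (hadef : a = a' + (v : ℝ) / ψ) (hbdef : b = b' + y / (μ * ψ))
    (hΔdef : Δ = q / (p + q)) (hzdef : z = ((v : ℝ) / ψ) / (a' + (v : ℝ) / ψ))
    (hω₁ : ω₁ = Δ * z) (hω₂ : ω₂ = Δ * (1 - z)) (hω₃ : ω₃ = 1 - Δ) :
    ω₁ + ω₂ + ω₃ = 1 ∧
    (p * a + q * b) / ((p + q) * a) = ω₁ * (y / ((v : ℝ) * μ)) + ω₂ * (b' / a') + ω₃ := by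
  have hv' : (0 : ℝ) < (v : ℝ) := by exact_mod_cast hv
  have ha : (0 : ℝ) < a := by rw [hadef]; positivity
  subst hadef hbdef hΔdef hzdef hω₁ hω₂ hω₃
  constructor
  · ring
  · field_simp
    ring
end
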